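/- arXiv:2508.10387 — 3 statements merged into one kernel-verified Lean document; each statement's English description precedes it below -/
import Mathlib

section
/- Under the curvature symmetry hypotheses on A and B, one has ∫_{ℝⁿ₊} E(x) U(x) dx = 0, where the integrand is absolutely integrable. -/
set_option maxHeartbeats 1000000

noncomputable section

open Real MeasureTheory

/-- Points of `ℝⁿ` written as `(x̃, xₙ)` with `x̃ ∈ ℝ^{n-1}`. -/
abbrev Pt (n : ℕ) : Type := (Fin (n - 1) → ℝ) × ℝ

/-- Squared Euclidean norm of the tangential part `x̃`. -/
def nsqT {m : ℕ} (y : Fin m → ℝ) : ℝ := ∑ i, (y i) ^ 2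

/-- Tangential partial derivative `∂ᵢ`, `i = 1, …, n-1`. -/
def pdT {n : ℕ} (i : Fin (n - 1)) (f : Pt n → ℝ) (x : Pt n) : ℝ :=
  fderiv ℝ f x (Pi.single i 1, 0)

/-- Normal partial derivative `∂ₙ`. -/
def pdN {n : ℕ} (f : Pt n → ℝ) (x : Pt n) : ℝ :=
  fderiv ℝ f x (0, 1)

/-- Euclidean Laplacian `Δ = Σᵢ ∂ᵢᵢ + ∂ₙₙ`. -/
def lap {n : ℕ} (f : Pt n → ℝ) (x : Pt n) : ℝ :=
  (∑ i, pdT i (pdT i f) x) + pdN (pdN f) x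

/-- The standard bubble
`U(x) = αₙ |K|^{-(n-2)/4} (|x̃|² + (xₙ + 𝔇)² - 1)^{-(n-2)/2}`. -/
def bubble (n : ℕ) (K D : ℝ) (x : Pt n) : ℝ :=
  (4 * (n : ℝ) * ((n : ℝ) - 1)) ^ (((n : ℝ) - 2) / 4) * |K| ^ (-(((n : ℝ) - 2) / 4)) *
    (nsqT x.1 + (x.2 + D) ^ 2 - 1) ^ (-(((n : ℝ) - 2) / 2))

/-! ### Auxiliary definitions -/

section Aux

open Finset

variable {n : ℕ}

def coordT (i : Fin (n-1)) : Pt n →L[ℝ] ℝ :=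
  (ContinuousLinearMap.proj i).comp (ContinuousLinearMap.fst ℝ (Fin (n-1) → ℝ) ℝ)

def coordN : Pt n →L[ℝ] ℝ := ContinuousLinearMap.snd ℝ (Fin (n-1) → ℝ) ℝ

def sfun (D : ℝ) : Pt n → ℝ := fun x => nsqT x.1 + (x.2 + D)^2 - 1

def sderiv (D : ℝ) (x : Pt n) : Pt n →L[ℝ] ℝ :=
  (∑ k, (2 * x.1 k) • coordT k) + (2*(x.2+D)) • coordN

lemma coordT_apply (i : Fin (n-1)) (v : Pt n) : coordT i v = v.1 i := rfl

lemma sderiv_applyT (D : ℝ) (x : Pt n) (i : Fin (n-1)) :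
    sderiv D x (Pi.single i 1, (0:ℝ)) = 2 * x.1 i := by
  have hN : coordN (n:=n) (Pi.single i 1, (0:ℝ)) = 0 := rfl
  simp only [sderiv, ContinuousLinearMap.add_apply, ContinuousLinearMap.sum_apply,
    ContinuousLinearMap.smul_apply, coordT_apply, hN,
    smul_eq_mul, mul_zero, add_zero, Pi.single_apply]
  rw [Finset.sum_congr rfl (fun k _ => by rw [mul_ite, mul_one, mul_zero])]
  simp [Finset.sum_ite_eq]

lemma hasFDerivAt_sfun (D : ℝ) (x : Pt n) : HasFDerivAt (sfun D) (sderiv D x) x := by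
  have h1 : ∀ k : Fin (n-1), HasFDerivAt (fun y : Pt n => (y.1 k)^2)
      ((2 * x.1 k) • coordT k) x := by
    intro k
    have hc := (coordT (n:=n) k).hasFDerivAt (x := x)
    have hmul := hc.mul hc
    have heq : (fun y : Pt n => (y.1 k)^2) = fun y => coordT k y * coordT k y := by
      funext y; rw [coordT_apply]; ring
    have hd : (2 * x.1 k) • coordT (n:=n) k
        = coordT k x • coordT k + coordT k x • coordT k := by
      rw [coordT_apply, two_mul, add_smul]
    rw [heq, hd]; exact hmul
  have hsum : HasFDerivAt (fun y : Pt n => ∑ k, (y.1 k)^2)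
      (∑ k, (2 * x.1 k) • coordT k) x := HasFDerivAt.fun_sum (fun k _ => h1 k)
  have h2 : HasFDerivAt (fun y : Pt n => (y.2 + D)^2) ((2*(x.2+D)) • coordN) x := by
    have hc := ((coordN (n:=n)).hasFDerivAt (x := x)).add_const D
    have hmul := hc.mul hc
    have heq : (fun y : Pt n => (y.2 + D)^2) = fun y => (coordN y + D) * (coordN y + D) := by
      funext y; show (y.2+D)^2 = (y.2+D)*(y.2+D); ring
    have hN : coordN (n:=n) x = x.2 := rfl
    have hd : (2 * (x.2+D)) • coordN (n:=n)
        = (coordN x + D) • coordN + (coordN x + D) • coordN := by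
      rw [hN, two_mul, add_smul]
    rw [heq, hd]; exact hmul
  have := (hsum.add h2).sub_const 1
  exact this

lemma continuous_sfun (D : ℝ) : Continuous (sfun (n:=n) D) := by
  unfold sfun nsqT
  fun_prop

lemma hasFDerivAt_rs (D q c : ℝ) (x : Pt n) (hx : sfun D x ≠ 0) :
    HasFDerivAt (fun y => c * sfun D y ^ q)
      ((c * (q * sfun D x ^ (q-1))) • sderiv D x) x := by
  have := ((hasFDerivAt_sfun D x).rpow_const (p := q) (Or.inl hx)).const_mul c
  simpa [smul_smul] using this

lemma pdT_rs (D q c : ℝ) (i : Fin (n-1)) (x : Pt n) (hx : sfun D x ≠ 0) :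
    pdT i (fun y => c * sfun D y ^ q) x = c * (q * sfun D x ^ (q-1)) * (2 * x.1 i) := by
  rw [pdT, (hasFDerivAt_rs D q c x hx).fderiv]
  simp [sderiv_applyT]

lemma pdT_pdT_rs (D q c : ℝ) (i j : Fin (n-1)) (x : Pt n) (hx : 0 < sfun D x) :
    pdT j (pdT i (fun y => c * sfun D y ^ q)) x
      = (c*q*2) * (sfun D x ^ (q-1) * (if i = j then 1 else 0))
        + (c*q*(q-1)*4) * (sfun D x ^ (q-2) * (x.1 i * x.1 j)) := by
  have hO : IsOpen {y : Pt n | 0 < sfun D y} := isOpen_lt continuous_const (continuous_sfun D)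
  set F1 : Pt n → ℝ := fun y => (c*q*2) * (sfun D y ^ (q-1) * y.1 i) with hF1
  have hev : pdT i (fun y => c * sfun D y ^ q) =ᶠ[nhds x] F1 := by
    filter_upwards [hO.mem_nhds hx] with y hy
    rw [pdT_rs D q c i y hy.ne']
    simp only [hF1]; ring
  have hF1d : HasFDerivAt F1
      ((c*q*2) • ((sfun D x ^ (q-1)) • (coordT i)
        + (x.1 i) • (((q-1) * sfun D x ^ (q-1-1)) • sderiv D x))) x := by
    have hr : HasFDerivAt (fun y => sfun D y ^ (q-1))
        (((q-1) * sfun D x ^ (q-1-1)) • sderiv D x) x :=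
      (hasFDerivAt_sfun D x).rpow_const (Or.inl hx.ne')
    have := (hr.mul ((coordT (n:=n) i).hasFDerivAt (x := x))).const_mul (c*q*2)
    simpa [coordT_apply] using this
  rw [pdT, hev.fderiv_eq, hF1d.fderiv]
  simp only [ContinuousLinearMap.smul_apply, ContinuousLinearMap.add_apply, coordT_apply,
    sderiv_applyT, smul_eq_mul, Pi.single_apply]
  rw [show q-1-1 = q-2 by ring]
  ring

/-! ### Algebraic identities -/

lemma sum_sum_antisymm {m : ℕ} (f : Fin m → Fin m → ℝ) (h : ∀ i k, f i k = -f k i) :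
    ∑ i, ∑ k, f i k = 0 := by
  have h2 : ∑ i, ∑ k, f i k = ∑ k, ∑ i, f i k := Finset.sum_comm
  have h3 : ∑ k, ∑ i, f i k = -∑ k, ∑ i, f k i := by
    rw [← Finset.sum_neg_distrib]
    exact Finset.sum_congr rfl fun k _ => by
      rw [← Finset.sum_neg_distrib]
      exact Finset.sum_congr rfl fun i _ => h i k
  have h4 := h2.trans h3
  linarith

lemma quad_comm {m : ℕ} (g : Fin m → Fin m → Fin m → Fin m → ℝ) :
    ∑ i, ∑ j, ∑ k, ∑ l, g i j k l = ∑ i, ∑ k, ∑ j, ∑ l, g i j k l :=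
  Finset.sum_congr rfl fun _ _ => Finset.sum_comm

lemma pull13 {m : ℕ} (g : Fin m → Fin m → ℝ) (X : ℝ) :
    (∑ k, ∑ l, (1/3 : ℝ) * (g k l) * X) = (1/3) * (∑ k, ∑ l, g k l) * X := by
  trans ∑ k, (1/3 : ℝ) * (∑ l, g k l) * X
  · exact Finset.sum_congr rfl fun k _ => by rw [Finset.mul_sum, Finset.sum_mul]
  · rw [Finset.mul_sum, Finset.sum_mul]

lemma alg_main {m : ℕ} (A : Fin m → Fin m → Fin m → Fin m → ℝ) (B : Fin m → Fin m → ℝ)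
    (hA1 : ∀ i k j l, A i k j l = -A k i j l) (hA4 : ∀ k l, ∑ i, A i k i l = 0)
    (hB2 : ∑ i, B i i = 0) (y : Fin m → ℝ) (t a b : ℝ) :
    ∑ i, ∑ j, ((1/3) * (∑ k, ∑ l, A i k j l * y k * y l) + B i j * t) *
      (b * (if i = j then (1:ℝ) else 0) + a * (y i * y j))
    = a * t * ∑ i, ∑ j, B i j * y i * y j := by
  have expand : ∀ i j, ((1/3) * (∑ k, ∑ l, A i k j l * y k * y l) + B i j * t) *
      (b * (if i = j then (1:ℝ) else 0) + a * (y i * y j))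
    = (if i = j then (1:ℝ) else 0) * ((1/3) * (∑ k, ∑ l, A i k j l * y k * y l) * b)
      + (∑ k, ∑ l, (1/3) * (A i k j l * y k * y l) * (a * (y i * y j)))
      + ((if i = j then (1:ℝ) else 0) * (B i j * t * b)
      + B i j * t * (a * (y i * y j))) := by
    intro i j
    rw [pull13 (fun k l => A i k j l * y k * y l) (a * (y i * y j))]
    ring
  simp only [expand, Finset.sum_add_distrib]
  have T1 : ∑ i, ∑ j, (if i = j then (1:ℝ) else 0) *
      ((1/3) * (∑ k, ∑ l, A i k j l * y k * y l) * b) = 0 := by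
    simp only [ite_mul, one_mul, zero_mul, Finset.sum_ite_eq, Finset.mem_univ, if_true]
    have h0 : ∑ i, ∑ k, ∑ l, A i k i l * y k * y l = 0 := by
      rw [Finset.sum_comm]
      rw [Finset.sum_congr rfl fun k (_ : k ∈ Finset.univ) => (Finset.sum_comm)]
      have inner : ∀ k l : Fin m, ∑ i, A i k i l * y k * y l = 0 := by
        intro k l
        rw [Finset.sum_congr rfl fun i (_ : i ∈ Finset.univ) => mul_assoc (A i k i l) (y k) (y l),
          ← Finset.sum_mul, hA4, zero_mul]
      simp [inner]
    rw [Finset.sum_congr rfl fun i (_ : i ∈ Finset.univ) =>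
      (mul_assoc ((1:ℝ)/3) (∑ k, ∑ l, A i k i l * y k * y l) b),
      ← Finset.mul_sum, ← Finset.sum_mul, h0]
    ring
  have T2 : ∑ i, ∑ j, (∑ k, ∑ l, (1/3 : ℝ) * (A i k j l * y k * y l) * (a * (y i * y j))) = 0 := by
    rw [quad_comm (fun i j k l => (1/3 : ℝ) * (A i k j l * y k * y l) * (a * (y i * y j)))]
    refine sum_sum_antisymm _ (fun i k => ?_)
    rw [← Finset.sum_neg_distrib]
    refine Finset.sum_congr rfl fun j _ => ?_
    rw [← Finset.sum_neg_distrib]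
    refine Finset.sum_congr rfl fun l _ => ?_
    rw [hA1 i k j l]
    ring
  have T3 : ∑ i, ∑ j, (if i = j then (1:ℝ) else 0) * (B i j * t * b) = 0 := by
    simp only [ite_mul, one_mul, zero_mul, Finset.sum_ite_eq, Finset.mem_univ, if_true]
    rw [← Finset.sum_mul, ← Finset.sum_mul, hB2]
    ring
  rw [T1, T2, T3]
  have T4 : ∀ i j, B i j * t * (a * (y i * y j)) = a * t * (B i j * y i * y j) := by
    intro i j; ring
  simp only [T4, ← Finset.mul_sum]
  ring

/-! ### Symmetry maps -/

def negMapF (i : Fin (n-1)) : Pt n → Pt n :=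
  fun x => (fun k => if k = i then -(x.1 k) else x.1 k, x.2)

def permMapF (σ : Equiv.Perm (Fin (n-1))) : Pt n → Pt n := fun x => (x.1 ∘ σ, x.2)

lemma mp_neg (i : Fin (n-1)) : MeasurePreserving (negMapF (n:=n) i) volume volume := by
  have hf : ∀ k : Fin (n-1), MeasurePreserving
      (fun t : ℝ => if k = i then -t else t) volume volume := by
    intro k
    by_cases h : k = i
    · simpa [h] using Measure.measurePreserving_neg (volume : Measure ℝ)
    · simp [h]; exact MeasurePreserving.id _
  have h1 := MeasureTheory.volume_preserving_pi hf
  have h2 := h1.prod (MeasurePreserving.id (volume : Measure ℝ))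
  rw [← Measure.volume_eq_prod] at h2
  exact h2

lemma mp_perm (σ : Equiv.Perm (Fin (n-1))) :
    MeasurePreserving (permMapF (n:=n) σ) volume volume := by
  have h1 : MeasurePreserving (fun y : Fin (n-1) → ℝ => y ∘ σ) volume volume := by
    have h := MeasureTheory.volume_measurePreserving_piCongrLeft
      (fun _ : Fin (n-1) => ℝ) σ.symm
    have he : ⇑(MeasurableEquiv.piCongrLeft (fun _ : Fin (n-1) => ℝ) σ.symm)
        = fun y : Fin (n-1) → ℝ => y ∘ σ := by
      funext y
      funext b
      have := MeasurableEquiv.piCongrLeft_apply_apply (σ.symm)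
        (β := fun _ : Fin (n-1) => ℝ) y (σ b)
      simpa using this
    rwa [he] at h
  have h2 := h1.prod (MeasurePreserving.id (volume : Measure ℝ))
  rw [← Measure.volume_eq_prod] at h2
  exact h2

def negME (i : Fin (n-1)) : Pt n ≃ᵐ Pt n where
  toEquiv := ⟨negMapF i, negMapF i,
    fun x => by
      unfold negMapF; refine Prod.ext (funext fun k => ?_) rfl
      by_cases h : k = i <;> simp [h],
    fun x => by
      unfold negMapF; refine Prod.ext (funext fun k => ?_) rfl
      by_cases h : k = i <;> simp [h]⟩
  measurable_toFun := (mp_neg i).measurable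
  measurable_invFun := (mp_neg i).measurable

def permME (σ : Equiv.Perm (Fin (n-1))) : Pt n ≃ᵐ Pt n where
  toEquiv := ⟨permMapF σ, permMapF σ.symm,
    fun x => by
      unfold permMapF; refine Prod.ext (funext fun k => ?_) rfl
      simp,
    fun x => by
      unfold permMapF; refine Prod.ext (funext fun k => ?_) rfl
      simp⟩
  measurable_toFun := (mp_perm σ).measurable
  measurable_invFun := (mp_perm σ.symm).measurable

lemma integral_comp_negMap (i : Fin (n-1)) (F : Pt n → ℝ) :
    ∫ x in {x : Pt n | 0 < x.2}, F (negMapF i x) = ∫ x in {x : Pt n | 0 < x.2}, F x := by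
  have := (mp_neg (n:=n) i).setIntegral_preimage_emb
    (negME i).measurableEmbedding F {x : Pt n | 0 < x.2}
  simpa [negMapF] using this

lemma integral_comp_permMap (σ : Equiv.Perm (Fin (n-1))) (F : Pt n → ℝ) :
    ∫ x in {x : Pt n | 0 < x.2}, F (permMapF σ x) = ∫ x in {x : Pt n | 0 < x.2}, F x := by
  have := (mp_perm (n:=n) σ).setIntegral_preimage_emb
    (permME σ).measurableEmbedding F {x : Pt n | 0 < x.2}
  simpa [permMapF] using this

lemma nsqT_negMap {m : ℕ} (i : Fin m) (y : Fin m → ℝ) :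
    nsqT (fun k => if k = i then -(y k) else y k) = nsqT y := by
  unfold nsqT
  exact Finset.sum_congr rfl fun k _ => by by_cases h : k = i <;> simp [h]

lemma nsqT_permMap {m : ℕ} (σ : Equiv.Perm (Fin m)) (y : Fin m → ℝ) :
    nsqT (y ∘ σ) = nsqT y := by
  unfold nsqT
  exact Equiv.sum_comp σ fun k => (y k)^2

lemma sfun_negMap (D : ℝ) (i : Fin (n-1)) (x : Pt n) :
    sfun D (negMapF i x) = sfun D x := by
  unfold sfun negMapF
  simp [nsqT_negMap]

lemma sfun_permMap (D : ℝ) (σ : Equiv.Perm (Fin (n-1))) (x : Pt n) :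
    sfun D (permMapF σ x) = sfun D x := by
  unfold sfun permMapF
  simp [nsqT_permMap]

/-! ### Integrability -/

lemma nsqT_nonneg {m : ℕ} (y : Fin m → ℝ) : 0 ≤ nsqT y :=
  Finset.sum_nonneg fun i _ => sq_nonneg _

lemma sq_le_nsqT {m : ℕ} (y : Fin m → ℝ) (i : Fin m) : (y i)^2 ≤ nsqT y :=
  Finset.single_le_sum (fun k (_ : k ∈ Finset.univ) => sq_nonneg (y k)) (Finset.mem_univ i)

lemma abs_mul_le_nsqT {m : ℕ} (y : Fin m → ℝ) (i j : Fin m) : |y i * y j| ≤ nsqT y := by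
  have hi := sq_le_nsqT y i
  have hj := sq_le_nsqT y j
  rw [abs_mul]
  nlinarith [sq_nonneg (|y i| - |y j|), sq_abs (y i), sq_abs (y j), abs_nonneg (y i),
    abs_nonneg (y j)]

lemma norm_sq_le (x : Pt n) : ‖x‖^2 ≤ nsqT x.1 + x.2^2 := by
  rw [Prod.norm_def]
  rcases max_cases ‖x.1‖ ‖x.2‖ with ⟨h, _⟩ | ⟨h, _⟩
  · rw [h]
    have h1 : ‖x.1‖^2 ≤ nsqT x.1 := by
      have h2 : ∀ i, ‖x.1 i‖ ≤ Real.sqrt (nsqT x.1) := by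
        intro i
        have h3 := sq_le_nsqT x.1 i
        have h4 : |x.1 i| ≤ Real.sqrt (nsqT x.1) := by
          rw [← Real.sqrt_sq_eq_abs]
          exact Real.sqrt_le_sqrt h3
        simpa using h4
      have := pi_norm_le_iff_of_nonneg (Real.sqrt_nonneg (nsqT x.1)) |>.2 h2
      calc ‖x.1‖^2 ≤ (Real.sqrt (nsqT x.1))^2 := by
            apply pow_le_pow_left₀ (norm_nonneg _) this
          _ = nsqT x.1 := Real.sq_sqrt (nsqT_nonneg _)
    nlinarith [sq_nonneg x.2]
  · rw [h]
    have : ‖x.2‖^2 = x.2^2 := by rw [Real.norm_eq_abs, sq_abs]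
    nlinarith [nsqT_nonneg x.1]

lemma integrableOn_gij (hn : 5 ≤ n) {D : ℝ} (hD : 1 < D) (κ : ℝ) (i j : Fin (n-1)) :
    IntegrableOn (fun x : Pt n => x.1 i * x.1 j * (κ * sfun D x ^ (-(n:ℝ)) * x.2^2))
      {x : Pt n | 0 < x.2} := by
  set S : Set (Pt n) := {x : Pt n | 0 < x.2} with hS
  have hSopen : IsOpen S := isOpen_lt continuous_const continuous_snd
  have hSmeas : MeasurableSet S := hSopen.measurableSet
  set m₀ : ℝ := D^2 - 1 with hm₀
  have hm₀pos : 0 < m₀ := by nlinarith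
  set c₁ : ℝ := min m₀ 1 / 2 with hc₁
  have hc₁pos : 0 < c₁ := by
    have := lt_min hm₀pos one_pos
    positivity
  have hbasic : ∀ x : Pt n, x ∈ S →
      0 < sfun D x ∧ nsqT x.1 + x.2^2 + m₀ ≤ sfun D x ∧
      c₁ * (1 + ‖x‖)^2 ≤ sfun D x := by
    intro x hx
    have hx2 : 0 < x.2 := hx
    have hkey : nsqT x.1 + x.2^2 + m₀ ≤ sfun D x := by
      have : x.2^2 + D^2 ≤ (x.2 + D)^2 := by nlinarith
      simp only [sfun, hm₀]; nlinarith
    have hpos : 0 < sfun D x := by nlinarith [nsqT_nonneg x.1, sq_nonneg x.2]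
    refine ⟨hpos, hkey, ?_⟩
    have hns := norm_sq_le x
    have hmin1 : min m₀ 1 ≤ m₀ := min_le_left _ _
    have hmin2 : min m₀ 1 ≤ 1 := min_le_right _ _
    have hminpos : 0 < min m₀ 1 := lt_min hm₀pos one_pos
    have hnn : 0 ≤ ‖x‖ := norm_nonneg x
    nlinarith [sq_nonneg (1 - ‖x‖), nsqT_nonneg x.1, sq_nonneg x.2]
  have hnr : (Module.finrank ℝ (Pt n) : ℝ) < 2*(n:ℝ) - 4 := by
    have h1 : Module.finrank ℝ (Pt n) = (n-1) + 1 := by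
      simp [Module.finrank_prod, Module.finrank_pi]
    rw [h1]
    have h2 : ((n:ℕ) - 1 + 1 : ℕ) = n := by omega
    rw [h2]
    have : (5:ℝ) ≤ (n:ℝ) := by exact_mod_cast hn
    linarith
  haveI : (volume : Measure (Pt n)).IsAddHaarMeasure := by
    rw [Measure.volume_eq_prod]; infer_instance
  have hint : Integrable (fun x : Pt n =>
      (|κ| * (1 + 1/m₀) * c₁ ^ ((2:ℝ) - n)) * (1 + ‖x‖) ^ (-(2*(n:ℝ) - 4))) volume :=
    (integrable_one_add_norm hnr).const_mul _
  refine Integrable.mono' (hint.restrict (s := S)) ?_ ?_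
  · apply ContinuousOn.aestronglyMeasurable ?_ hSmeas
    have hcont : ContinuousOn (fun x : Pt n => sfun D x ^ (-(n:ℝ))) S := by
      apply ContinuousOn.rpow_const (continuous_sfun D).continuousOn
      intro x hx
      exact Or.inl (hbasic x hx).1.ne'
    fun_prop
  · rw [ae_restrict_iff' hSmeas]
    refine Filter.Eventually.of_forall fun x hx => ?_
    obtain ⟨hpos, hkey, hnorm⟩ := hbasic x hx
    have hx2 : (0:ℝ) < x.2 := hx
    set s := sfun D x with hs
    have h1 : |x.1 i * x.1 j * (κ * s ^ (-(n:ℝ)) * x.2^2)|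
        = |κ| * (s ^ (-(n:ℝ)) * ((|x.1 i| * |x.1 j|) * x.2^2)) := by
      simp only [abs_mul]
      rw [abs_of_nonneg (rpow_nonneg hpos.le (-(n:ℝ))), abs_of_nonneg (sq_nonneg x.2)]
      ring
    rw [Real.norm_eq_abs, h1]
    have hb1 : |x.1 i| * |x.1 j| ≤ s := by
      have h5 := abs_mul_le_nsqT x.1 i j
      rw [abs_mul] at h5
      nlinarith [sq_nonneg x.2]
    have hb2 : x.2^2 ≤ s := by nlinarith [nsqT_nonneg x.1]
    have hstep : s ^ (-(n:ℝ)) * ((|x.1 i| * |x.1 j|) * x.2^2)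
        ≤ (1 + 1/m₀) * s ^ ((2:ℝ) - n) := by
      have hsn : (0:ℝ) < s ^ (-(n:ℝ)) := rpow_pos_of_pos hpos _
      have hrw : s ^ ((2:ℝ) - n) = s ^ (-(n:ℝ)) * (s * s) := by
        rw [show (2:ℝ) - n = -(n:ℝ) + 1 + 1 by ring, rpow_add hpos, rpow_add hpos, rpow_one]
        ring
      have e1 : (|x.1 i| * |x.1 j|) * x.2^2 ≤ s * s :=
        mul_le_mul hb1 hb2 (sq_nonneg _) hpos.le
      have e2 : s ^ (-(n:ℝ)) * ((|x.1 i| * |x.1 j|) * x.2^2) ≤ s ^ (-(n:ℝ)) * (s * s) :=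
        mul_le_mul_of_nonneg_left e1 hsn.le
      have e3 : s ^ ((2:ℝ) - n) ≤ (1 + 1/m₀) * s ^ ((2:ℝ) - n) := by
        have h6 : (0:ℝ) ≤ s ^ ((2:ℝ) - n) := (rpow_pos_of_pos hpos _).le
        have h7 : (1:ℝ) ≤ 1 + 1/m₀ := by
          have : (0:ℝ) < 1/m₀ := by positivity
          linarith
        exact le_mul_of_one_le_left h6 h7
      calc s ^ (-(n:ℝ)) * ((|x.1 i| * |x.1 j|) * x.2^2)
          ≤ s ^ (-(n:ℝ)) * (s * s) := e2
        _ = s ^ ((2:ℝ) - n) := hrw.symm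
        _ ≤ (1 + 1/m₀) * s ^ ((2:ℝ) - n) := e3
    have hfinal : s ^ ((2:ℝ) - n) ≤ c₁ ^ ((2:ℝ) - n) * (1 + ‖x‖) ^ (-(2*(n:ℝ) - 4)) := by
      have h1n : (0:ℝ) < 1 + ‖x‖ := by positivity
      have hcb : 0 < c₁ * (1 + ‖x‖)^2 := by positivity
      have hmono : s ^ ((2:ℝ) - n) ≤ (c₁ * (1 + ‖x‖)^2) ^ ((2:ℝ) - n) := by
        apply Real.rpow_le_rpow_of_nonpos hcb hnorm
        have : (5:ℝ) ≤ (n:ℝ) := by exact_mod_cast hn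
        linarith
      refine hmono.trans (le_of_eq ?_)
      rw [Real.mul_rpow hc₁pos.le (sq_nonneg _)]
      congr 1
      rw [← Real.rpow_natCast (1 + ‖x‖) 2, ← Real.rpow_mul h1n.le]
      congr 1
      push_cast
      ring
    calc |κ| * (s ^ (-(n:ℝ)) * ((|x.1 i| * |x.1 j|) * x.2^2))
        ≤ |κ| * ((1 + 1/m₀) * s ^ ((2:ℝ) - n)) := by
          apply mul_le_mul_of_nonneg_left hstep (abs_nonneg κ)
      _ ≤ |κ| * ((1 + 1/m₀) * (c₁ ^ ((2:ℝ) - n) * (1 + ‖x‖) ^ (-(2*(n:ℝ) - 4)))) := by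
          apply mul_le_mul_of_nonneg_left _ (abs_nonneg κ)
          apply mul_le_mul_of_nonneg_left hfinal
          positivity
      _ = |κ| * (1 + 1/m₀) * c₁ ^ ((2:ℝ) - n) * (1 + ‖x‖) ^ (-(2*(n:ℝ) - 4)) := by ring

end Aux
/-- under the curvature symmetry hypotheses on `A` and `B`,
`∫_{ℝⁿ₊} E U dx = 0`, the integrand being absolutely integrable, where
`E = cₙ Σᵢⱼ [ (1/3) Σₖₗ Aᵢₖⱼₗ xₖ xₗ + Bᵢⱼ xₙ² ] ∂²ᵢⱼU`. -/
theorem stmt_7 (n : ℕ) (hn : 5 ≤ n) (K D : ℝ) (hK : K < 0) (hD : 1 < D)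
    (cn : ℝ) (hcn : cn = 4 * ((n : ℝ) - 1) / ((n : ℝ) - 2))
    (A : Fin (n - 1) → Fin (n - 1) → Fin (n - 1) → Fin (n - 1) → ℝ)
    (B : Fin (n - 1) → Fin (n - 1) → ℝ)
    (hA1 : ∀ i k j l, A i k j l = -A k i j l)
    (hA2 : ∀ i k j l, A i k j l = -A i k l j)
    (hA3 : ∀ i k j l, A i k j l = A j l i k)
    (hA4 : ∀ k l, ∑ i, A i k i l = 0)
    (hB1 : ∀ i j, B i j = B j i)
    (hB2 : ∑ i, B i i = 0)
    (U : Pt n → ℝ) (hU : U = bubble n K D)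
    (E : Pt n → ℝ)
    (hE : E = fun x : Pt n =>
      cn * ∑ i, ∑ j,
        ((1 / 3) * (∑ k, ∑ l, A i k j l * x.1 k * x.1 l) + B i j * x.2 ^ 2) *
          pdT j (pdT i U) x) :
    IntegrableOn (fun x : Pt n => E x * U x) {x : Pt n | 0 < x.2} ∧
    ∫ x in {x : Pt n | 0 < x.2}, E x * U x = 0 := by
  have hSmeas : MeasurableSet {x : Pt n | 0 < x.2} :=
    (isOpen_lt continuous_const continuous_snd).measurableSet
  set S : Set (Pt n) := {x : Pt n | 0 < x.2} with hSdef
  set q : ℝ := -(((n:ℝ) - 2) / 2) with hq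
  set c0 : ℝ := (4 * (n : ℝ) * ((n : ℝ) - 1)) ^ (((n : ℝ) - 2) / 4) *
    |K| ^ (-(((n : ℝ) - 2) / 4)) with hc0
  have hUc : U = fun x : Pt n => c0 * sfun D x ^ q := by
    rw [hU]; rfl
  set κ : ℝ := cn * (c0 * q * (q-1) * 4) * c0 with hκ
  set g : Fin (n-1) → Fin (n-1) → Pt n → ℝ :=
    fun i j x => x.1 i * x.1 j * (κ * sfun D x ^ (-(n:ℝ)) * x.2^2) with hg
  have hspos : ∀ x : Pt n, x ∈ S → 0 < sfun D x := by
    intro x hx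
    have hx2 : (0:ℝ) < x.2 := hx
    have h5 : x.2^2 + D^2 ≤ (x.2+D)^2 := by nlinarith
    have h6 := nsqT_nonneg x.1
    simp only [sfun]
    nlinarith [sq_nonneg x.2]
  -- pointwise identity on S
  have heq : ∀ x ∈ S, E x * U x = ∑ i, ∑ j, B i j * g i j x := by
    intro x hx
    have hsx := hspos x hx
    have hhess : ∀ i j : Fin (n-1), pdT j (pdT i U) x
        = ((c0*q*2) * sfun D x ^ (q-1)) * (if i = j then (1:ℝ) else 0)
          + ((c0*q*(q-1)*4) * sfun D x ^ (q-2)) * (x.1 i * x.1 j) := by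
      intro i j
      rw [hUc, pdT_pdT_rs D q c0 i j x hsx]
      ring
    simp only [hE]
    have hsum : ∑ i, ∑ j, ((1/3) * (∑ k, ∑ l, A i k j l * x.1 k * x.1 l) + B i j * x.2^2) *
          pdT j (pdT i U) x
        = ∑ i, ∑ j, ((1/3) * (∑ k, ∑ l, A i k j l * x.1 k * x.1 l) + B i j * x.2^2) *
            (((c0*q*2) * sfun D x ^ (q-1)) * (if i = j then (1:ℝ) else 0)
             + ((c0*q*(q-1)*4) * sfun D x ^ (q-2)) * (x.1 i * x.1 j)) :=
      Finset.sum_congr rfl fun i _ => Finset.sum_congr rfl fun j _ => by rw [hhess i j]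
    rw [hsum, alg_main A B hA1 hA4 hB2 x.1 (x.2^2) _ _]
    simp only [hUc]
    have hexp : sfun D x ^ (q-2) * sfun D x ^ q = sfun D x ^ (-(n:ℝ)) := by
      rw [← Real.rpow_add hsx]
      congr 1
      rw [hq]; ring
    have hpull2 : ∀ c : ℝ, ∑ i, ∑ j, B i j * (x.1 i * x.1 j * c)
        = c * ∑ i, ∑ j, B i j * x.1 i * x.1 j := by
      intro c
      rw [Finset.mul_sum]
      refine Finset.sum_congr rfl fun i _ => ?_
      rw [Finset.mul_sum]
      exact Finset.sum_congr rfl fun j _ => by ring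
    have hRHS : ∑ i, ∑ j, B i j * g i j x
        = (κ * sfun D x ^ (-(n:ℝ)) * x.2^2) * ∑ i, ∑ j, B i j * x.1 i * x.1 j := by
      simp only [hg]
      exact hpull2 _
    rw [hRHS, ← hexp, hκ]
    ring
  -- integrability
  have hgint : ∀ i j : Fin (n-1), IntegrableOn (g i j) S := by
    intro i j
    simp only [hg]
    exact integrableOn_gij hn hD κ i j
  have hsumint : IntegrableOn (fun x => ∑ i, ∑ j, B i j * g i j x) S := by
    apply integrable_finset_sum
    intro i _
    apply integrable_finset_sum
    intro j _
    exact (hgint i j).const_mul (B i j)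
  have hEUint : IntegrableOn (fun x : Pt n => E x * U x) S := by
    refine hsumint.congr ?_
    rw [Filter.EventuallyEq, ae_restrict_iff' hSmeas]
    exact Filter.Eventually.of_forall fun x hx => (heq x hx).symm
  refine ⟨hEUint, ?_⟩
  rw [setIntegral_congr_fun hSmeas (fun x hx => heq x hx)]
  rw [integral_finset_sum _ (fun i _ =>
    integrable_finset_sum _ (fun j _ => (hgint i j).const_mul (B i j)))]
  have h1 : ∀ i : Fin (n-1), ∫ x in S, (∑ j, B i j * g i j x) = ∑ j, B i j * ∫ x in S, g i j x := by
    intro i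
    rw [integral_finset_sum _ (fun j _ => (hgint i j).const_mul (B i j))]
    exact Finset.sum_congr rfl fun j _ => integral_const_mul _ _
  simp only [h1]
  -- off-diagonal integrals vanish
  have hJoff : ∀ i j : Fin (n-1), i ≠ j → ∫ x in S, g i j x = 0 := by
    intro i j hij
    have hT := integral_comp_negMap (n:=n) i (g i j)
    have hcomp : ∀ x : Pt n, g i j (negMapF i x) = - g i j x := by
      intro x
      have e1 : (negMapF i x).1 i = -x.1 i := by simp [negMapF]
      have e2 : (negMapF i x).1 j = x.1 j := by simp [negMapF, hij.symm]
      have e3 : sfun D (negMapF i x) = sfun D x := sfun_negMap D i x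
      have e4 : (negMapF i x).2 = x.2 := rfl
      simp only [hg]
      rw [e1, e2, e3, e4]
      ring
    have h2 : ∫ x in S, g i j (negMapF i x) = - ∫ x in S, g i j x := by
      calc ∫ x in S, g i j (negMapF i x) = ∫ x in S, -(g i j x) := by
            exact setIntegral_congr_fun hSmeas (fun x _ => hcomp x)
        _ = - ∫ x in S, g i j x := integral_neg _
    have h3 : ∫ x in S, g i j x = - ∫ x in S, g i j x := hT.symm.trans h2
    linarith
  -- diagonal integrals agree
  have hi0 : 0 < n - 1 := by omega
  have hJdiag : ∀ i : Fin (n-1), ∫ x in S, g i i x = ∫ x in S, g ⟨0, hi0⟩ ⟨0, hi0⟩ x := by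
    intro i
    set i0 : Fin (n-1) := ⟨0, hi0⟩ with hi0'
    have hσ := integral_comp_permMap (n:=n) (Equiv.swap i0 i) (g i0 i0)
    have hcomp : ∀ x : Pt n, g i0 i0 (permMapF (Equiv.swap i0 i) x) = g i i x := by
      intro x
      have e1 : (permMapF (Equiv.swap i0 i) x).1 i0 = x.1 i := by
        simp [permMapF, Equiv.swap_apply_left]
      have e3 : sfun D (permMapF (Equiv.swap i0 i) x) = sfun D x :=
        sfun_permMap D (Equiv.swap i0 i) x
      have e4 : (permMapF (Equiv.swap i0 i) x).2 = x.2 := rfl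
      simp only [hg]
      rw [e1, e3, e4]
    rw [← hσ]
    exact setIntegral_congr_fun hSmeas (fun x _ => (hcomp x).symm)
  have hfin : ∀ i : Fin (n-1), ∑ j, B i j * ∫ x in S, g i j x
      = B i i * ∫ x in S, g ⟨0, hi0⟩ ⟨0, hi0⟩ x := by
    intro i
    rw [Finset.sum_eq_single i
      (fun j _ hji => by rw [hJoff i j (Ne.symm hji), mul_zero])
      (fun h => absurd (Finset.mem_univ i) h)]
    rw [hJdiag i]
  rw [Finset.sum_congr rfl (fun i _ => hfin i), ← Finset.sum_mul, hB2, zero_mul]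
end
end

section
/- One has the strict inequality (n−3) φ̃_{(n−1)/2} < 4 φ̂_{(n−3)/2}; equivalently, (n−3) ∫_𝔇^∞ (t−𝔇)⁴ (t²−1)^{−(n−1)/2} dt < 4 ∫_𝔇^∞ (t−𝔇)² (t²−1)^{−(n−3)/2} dt. (This is the strict negativity of the quantity I₁ appearing in the expansion of the reduced energy, i.e. the positivity of the constant 𝚂.) -/
noncomputable section

open Real MeasureTheory Set Filter

/-- Pointwise bound: `(t² - 1)^(-c) ≤ (1 - D⁻¹²)^(-c) * t^(-(2c))` for `t > D > 1`. -/
lemma aux_rpow_bound {D : ℝ} (hD : 1 < D) {c : ℝ} (hc : 0 < c) {t : ℝ} (ht : D < t) :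
    (t ^ 2 - 1) ^ (-c) ≤ (1 - D⁻¹ ^ 2) ^ (-c) * t ^ (-(2 * c)) := by
  have hD0 : 0 < D := by linarith
  have ht0 : (0:ℝ) < t := by linarith
  have hk : (0:ℝ) < 1 - D⁻¹ ^ 2 := by
    have h1 : D⁻¹ < 1 := by
      rw [inv_lt_one_iff₀]; right; exact hD
    have h2 : D⁻¹ ^ 2 < 1 := by
      have h0 : (0:ℝ) ≤ D⁻¹ := by positivity
      nlinarith
    linarith
  have hkt : (1 - D⁻¹ ^ 2) * t ^ 2 ≤ t ^ 2 - 1 := by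
    have h1 : (1:ℝ) ≤ t * D⁻¹ := by
      rw [← mul_inv_cancel₀ hD0.ne']
      exact mul_le_mul_of_nonneg_right ht.le (by positivity)
    nlinarith [h1]
  have hpos : (0:ℝ) < (1 - D⁻¹ ^ 2) * t ^ 2 := by positivity
  have h1 : (t ^ 2 - 1) ^ (-c) ≤ ((1 - D⁻¹ ^ 2) * t ^ 2) ^ (-c) :=
    Real.rpow_le_rpow_of_nonpos hpos hkt (by linarith)
  have h2 : ((1 - D⁻¹ ^ 2) * t ^ 2) ^ (-c) = (1 - D⁻¹ ^ 2) ^ (-c) * t ^ (-(2 * c)) := by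
    rw [Real.mul_rpow hk.le (by positivity)]
    congr 1
    rw [show (t:ℝ) ^ 2 = t ^ (2:ℝ) by rw [← Real.rpow_natCast t 2]; norm_num,
      ← Real.rpow_mul ht0.le]
    congr 1; ring
  rw [h2] at h1
  exact h1

/-- Integrability of `P(t) * (t²-1)^(-c)` on `(D,∞)` when `|P t| ≤ t^r` and `r - 2c < -1`. -/
lemma aux_integrable {D : ℝ} (hD : 1 < D) {c r : ℝ} (hc : 0 < c) (hr : r - 2 * c < -1)
    {P : ℝ → ℝ} (hP : Continuous P) (hbd : ∀ t ∈ Ioi D, |P t| ≤ t ^ r) :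
    IntegrableOn (fun t => P t * (t ^ 2 - 1) ^ (-c)) (Ioi D) := by
  have hD0 : (0:ℝ) < D := by linarith
  have hg : IntegrableOn (fun t => (1 - D⁻¹ ^ 2) ^ (-c) * t ^ (r - 2 * c)) (Ioi D) :=
    (integrableOn_Ioi_rpow_of_lt hr hD0).const_mul _
  apply Integrable.mono' hg
  · apply ContinuousOn.aestronglyMeasurable _ measurableSet_Ioi
    apply hP.continuousOn.mul
    apply ContinuousOn.rpow_const ((continuous_pow 2).sub continuous_const).continuousOn
    intro t ht
    left
    have : (1:ℝ) < t := lt_trans hD ht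
    show (t:ℝ) ^ 2 - 1 ≠ 0
    nlinarith
  · filter_upwards [ae_restrict_mem measurableSet_Ioi] with t ht
    have ht' : D < t := ht
    have ht0 : (0:ℝ) < t := by linarith
    have hbase : (0:ℝ) < t ^ 2 - 1 := by nlinarith
    rw [norm_mul, Real.norm_eq_abs, Real.norm_eq_abs,
      abs_of_nonneg (Real.rpow_nonneg hbase.le _)]
    calc |P t| * (t ^ 2 - 1) ^ (-c)
        ≤ t ^ r * ((1 - D⁻¹ ^ 2) ^ (-c) * t ^ (-(2 * c))) := by
          apply mul_le_mul (hbd t ht') (aux_rpow_bound hD hc ht')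
            (Real.rpow_nonneg hbase.le _) (Real.rpow_nonneg ht0.le _)
      _ = (1 - D⁻¹ ^ 2) ^ (-c) * t ^ (r - 2 * c) := by
          rw [show r - 2 * c = r + -(2 * c) by ring, Real.rpow_add ht0]
          ring

set_option maxHeartbeats 1000000 in
/-- the strict inequality `(n-3) φ̃_{(n-1)/2} < 4 φ̂_{(n-3)/2}`,
i.e. the strict negativity of the quantity `I₁` (positivity of `𝚂`). -/
theorem stmt_16 (n : ℕ) (hn : 7 ≤ n) (D : ℝ) (hD : 1 < D) :
    ((n : ℝ) - 3) *
        (∫ t in Set.Ioi D, (t - D) ^ 4 * (t ^ 2 - 1) ^ (-(((n : ℝ) - 1) / 2)))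
      < 4 * ∫ t in Set.Ioi D, (t - D) ^ 2 * (t ^ 2 - 1) ^ (-(((n : ℝ) - 3) / 2)) := by
  have hn7 : (7:ℝ) ≤ (n:ℝ) := by exact_mod_cast hn
  set a : ℝ := ((n : ℝ) - 1) / 2 with ha_def
  set b : ℝ := ((n : ℝ) - 3) / 2 with hb_def
  have ha : (0:ℝ) < a := by rw [ha_def]; linarith
  have hb : (0:ℝ) < b := by rw [hb_def]; linarith
  have hab : -b - 1 = -a := by rw [ha_def, hb_def]; ring
  have h2b : 2 * b = (n:ℝ) - 3 := by rw [hb_def]; ring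
  have hD0 : (0:ℝ) < D := by linarith
  -- the three integrands
  set f1 : ℝ → ℝ := fun t => (t - D) ^ 4 * (t ^ 2 - 1) ^ (-a) with hf1_def
  set f2 : ℝ → ℝ := fun t => t * (t - D) ^ 3 * (t ^ 2 - 1) ^ (-a) with hf2_def
  set f3 : ℝ → ℝ := fun t => (t - D) ^ 2 * (t ^ 2 - 1) ^ (-b) with hf3_def
  -- integrability
  have hI1 : IntegrableOn f1 (Ioi D) := by
    apply aux_integrable hD ha (r := 4) (by rw [ha_def]; linarith)
      (by continuity)
    intro t ht
    have ht' : D < t := ht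
    have h0 : (0:ℝ) ≤ t - D := by linarith
    rw [abs_of_nonneg (by positivity), show ((4:ℝ)) = ((4:ℕ):ℝ) by norm_num,
      Real.rpow_natCast]
    exact pow_le_pow_left₀ h0 (by linarith) 4
  have hI2 : IntegrableOn f2 (Ioi D) := by
    apply aux_integrable hD ha (r := 4) (by rw [ha_def]; linarith)
      (by continuity)
    intro t ht
    have ht' : D < t := ht
    have h0 : (0:ℝ) ≤ t - D := by linarith
    have ht0 : (0:ℝ) < t := by linarith
    rw [abs_of_nonneg (by positivity), show ((4:ℝ)) = ((4:ℕ):ℝ) by norm_num,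
      Real.rpow_natCast]
    calc t * (t - D) ^ 3 ≤ t * t ^ 3 := by
          apply mul_le_mul_of_nonneg_left (pow_le_pow_left₀ h0 (by linarith) 3) ht0.le
      _ = t ^ 4 := by ring
  have hI3 : IntegrableOn f3 (Ioi D) := by
    apply aux_integrable hD hb (r := 2) (by rw [hb_def]; linarith)
      (by continuity)
    intro t ht
    have ht' : D < t := ht
    have h0 : (0:ℝ) ≤ t - D := by linarith
    rw [abs_of_nonneg (by positivity), show ((2:ℝ)) = ((2:ℕ):ℝ) by norm_num,
      Real.rpow_natCast]
    exact pow_le_pow_left₀ h0 (by linarith) 2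
  -- the FTC identity:  (2b) ∫ f2 = 3 ∫ f3
  set g : ℝ → ℝ := fun t => (t - D) ^ 3 * (t ^ 2 - 1) ^ (-b) with hg_def
  set G : ℝ → ℝ := fun t => 3 * f3 t - (2 * b) * f2 t with hG_def
  have hderiv : ∀ t ∈ Ioi D, HasDerivAt g (G t) t := by
    intro t ht
    have ht' : D < t := ht
    have hbase : (0:ℝ) < t ^ 2 - 1 := by nlinarith
    have h1 : HasDerivAt (fun t => (t - D) ^ 3) (3 * (t - D) ^ 2) t := by
      have := ((hasDerivAt_id t).sub_const D).fun_pow 3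
      simpa using this
    have h2 : HasDerivAt (fun t => (t ^ 2 - 1) ^ (-b)) ((2 * t) * (-b) * (t ^ 2 - 1) ^ (-b - 1)) t := by
      have hq : HasDerivAt (fun t : ℝ => t ^ 2 - 1) (2 * t) t := by
        have := (hasDerivAt_pow 2 t).sub_const 1
        simpa using this
      exact hq.rpow_const (Or.inl hbase.ne')
    have := h1.mul h2
    have heq : 3 * (t - D) ^ 2 * (t ^ 2 - 1) ^ (-b)
        + (t - D) ^ 3 * (2 * t * (-b) * (t ^ 2 - 1) ^ (-b - 1)) = G t := by
      rw [hG_def, hab, hf3_def, hf2_def]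
      ring
    rw [heq] at this
    exact this
  have hIG : IntegrableOn G (Ioi D) := by
    exact (hI3.const_mul 3).sub (hI2.const_mul (2 * b))
  have hcont : ContinuousWithinAt g (Ici D) D := by
    apply ContinuousAt.continuousWithinAt
    apply ContinuousAt.mul
    · exact (continuous_pow 3).continuousAt.comp (by fun_prop)
    · apply ContinuousAt.rpow_const (by fun_prop)
      left; nlinarith
  have htend : Tendsto g atTop (nhds 0) := by
    have hKpos : (0:ℝ) ≤ (1 - D⁻¹ ^ 2) ^ (-b) := by
      apply Real.rpow_nonneg
      have h1 : D⁻¹ < 1 := by rw [inv_lt_one_iff₀]; right; exact hD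
      have h0 : (0:ℝ) ≤ D⁻¹ := by positivity
      nlinarith
    apply squeeze_zero' (g := fun t => (1 - D⁻¹ ^ 2) ^ (-b) * t ^ (3 - 2 * b))
    · filter_upwards [eventually_gt_atTop D] with t ht
      have hbase : (0:ℝ) < t ^ 2 - 1 := by nlinarith
      rw [hg_def]
      have h0 : (0:ℝ) ≤ t - D := by linarith
      positivity
    · filter_upwards [eventually_gt_atTop D] with t ht
      have ht0 : (0:ℝ) < t := by linarith
      have hbase : (0:ℝ) < t ^ 2 - 1 := by nlinarith
      rw [hg_def]
      calc (t - D) ^ 3 * (t ^ 2 - 1) ^ (-b)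
          ≤ t ^ (3:ℝ) * ((1 - D⁻¹ ^ 2) ^ (-b) * t ^ (-(2 * b))) := by
            apply mul_le_mul _ (aux_rpow_bound hD hb ht) (Real.rpow_nonneg hbase.le _)
              (Real.rpow_nonneg ht0.le _)
            rw [show ((3:ℝ)) = ((3:ℕ):ℝ) by norm_num, Real.rpow_natCast]
            exact pow_le_pow_left₀ (by linarith) (by linarith) 3
        _ = (1 - D⁻¹ ^ 2) ^ (-b) * t ^ (3 - 2 * b) := by
            rw [show (3:ℝ) - 2 * b = 3 + -(2 * b) by ring, Real.rpow_add ht0]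
            ring
    · have h1 : Tendsto (fun t : ℝ => t ^ (-(2 * b - 3))) atTop (nhds 0) :=
        tendsto_rpow_neg_atTop (by linarith)
      have h2 := h1.const_mul ((1 - D⁻¹ ^ 2) ^ (-b))
      simp only [mul_zero] at h2
      convert h2 using 2 with t
      ring_nf
  have hFTC : ∫ t in Ioi D, G t = 0 - g D :=
    integral_Ioi_of_hasDerivAt_of_tendsto hcont hderiv hIG htend
  have hgD : g D = 0 := by rw [hg_def]; simp
  rw [hgD, sub_zero] at hFTC
  have hsplit : ∫ t in Ioi D, G t
      = 3 * (∫ t in Ioi D, f3 t) - (2 * b) * ∫ t in Ioi D, f2 t := by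
    rw [hG_def]
    rw [integral_sub (hI3.const_mul 3) (hI2.const_mul (2 * b)),
      integral_const_mul, integral_const_mul]
  have hkey : (2 * b) * (∫ t in Ioi D, f2 t) = 3 * ∫ t in Ioi D, f3 t := by
    rw [hsplit] at hFTC; linarith
  -- pointwise comparison f1 ≤ f2
  have hmono : (∫ t in Ioi D, f1 t) ≤ ∫ t in Ioi D, f2 t := by
    apply setIntegral_mono_on hI1 hI2 measurableSet_Ioi
    intro t ht
    have ht' : D < t := ht
    have hbase : (0:ℝ) < t ^ 2 - 1 := by nlinarith
    rw [hf1_def, hf2_def]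
    apply mul_le_mul_of_nonneg_right _ (Real.rpow_nonneg hbase.le _)
    have h0 : (0:ℝ) ≤ t - D := by linarith
    calc (t - D) ^ 4 = (t - D) * (t - D) ^ 3 := by ring
      _ ≤ t * (t - D) ^ 3 := by
          apply mul_le_mul_of_nonneg_right (by linarith) (by positivity)
  -- positivity of ∫ f3
  have hnn : 0 ≤ᶠ[MeasureTheory.ae (volume.restrict (Ioi D))] f3 := by
    filter_upwards [ae_restrict_mem measurableSet_Ioi] with t ht
    have ht' : D < t := ht
    have hbase : (0:ℝ) < t ^ 2 - 1 := by nlinarith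
    rw [hf3_def]
    have h0 : (0:ℝ) ≤ t - D := by linarith
    positivity
  have hpos3 : 0 < ∫ t in Ioi D, f3 t := by
    rw [setIntegral_pos_iff_support_of_nonneg_ae hnn hI3]
    have hsub : Ioi D ⊆ Function.support f3 := by
      intro t ht
      have ht' : D < t := ht
      have hbase : (0:ℝ) < t ^ 2 - 1 := by nlinarith
      have : 0 < f3 t := by
        rw [hf3_def]
        have : (0:ℝ) < t - D := by linarith
        positivity
      exact this.ne'
    have heq : Function.support f3 ∩ Ioi D = Ioi D := by
      rw [Set.inter_eq_right]; exact hsub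
    rw [heq, Real.volume_Ioi]
    exact ENNReal.zero_lt_top
  -- conclude
  have step1 : ((n:ℝ) - 3) * (∫ t in Ioi D, f1 t) ≤ ((n:ℝ) - 3) * ∫ t in Ioi D, f2 t :=
    mul_le_mul_of_nonneg_left hmono (by linarith)
  have step2 : ((n:ℝ) - 3) * (∫ t in Ioi D, f2 t) = 3 * ∫ t in Ioi D, f3 t := by
    rw [← h2b]; exact hkey
  calc ((n:ℝ) - 3) * (∫ t in Ioi D, f1 t)
      ≤ 3 * ∫ t in Ioi D, f3 t := by rw [← step2]; exact step1
    _ < 4 * ∫ t in Ioi D, f3 t := by linarith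
end
end

section
/- Under the curvature symmetry hypotheses on A and B, the second-order term in the expansion of the gradient energy of the bubble vanishes: ∫_{ℝⁿ₊} Σ_{i,j=1}^{n−1} [ (1/3) Σ_{k,l=1}^{n−1} A_{ikjl} x_k x_l + B_{ij} xₙ² ] ∂ᵢU(x) ∂ⱼU(x) dx = 0, the integrand being absolutely integrable. -/
noncomputable section

open Real MeasureTheory

def wfun (n : ℕ) (D : ℝ) (x : Pt n) : ℝ := nsqT x.1 + (x.2 + D) ^ 2 - 1
def Cc (n : ℕ) (K : ℝ) : ℝ :=
  (4 * (n : ℝ) * ((n : ℝ) - 1)) ^ (((n : ℝ) - 2) / 4) * |K| ^ (-(((n : ℝ) - 2) / 4))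
def pe (n : ℕ) : ℝ := -(((n : ℝ) - 2) / 2)

lemma bubble_eq (n : ℕ) (K D : ℝ) :
    bubble n K D = fun x => Cc n K * (wfun n D x) ^ (pe n) := rfl

def Lw (n : ℕ) (D : ℝ) (x : Pt n) : Pt n →L[ℝ] ℝ :=
  (∑ k, (x.1 k •
      ((ContinuousLinearMap.proj k).comp (ContinuousLinearMap.fst ℝ (Fin (n - 1) → ℝ) ℝ)) +
    x.1 k •
      ((ContinuousLinearMap.proj k).comp (ContinuousLinearMap.fst ℝ (Fin (n - 1) → ℝ) ℝ)))) +
    ((x.2 + D) • (ContinuousLinearMap.snd ℝ (Fin (n - 1) → ℝ) ℝ) +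
     (x.2 + D) • (ContinuousLinearMap.snd ℝ (Fin (n - 1) → ℝ) ℝ))

lemma hasFDerivAt_wfun (n : ℕ) (D : ℝ) (x : Pt n) :
    HasFDerivAt (wfun n D) (Lw n D x) x := by
  have hc : ∀ k : Fin (n - 1), HasFDerivAt (fun x : Pt n => x.1 k)
      ((ContinuousLinearMap.proj k).comp (ContinuousLinearMap.fst ℝ (Fin (n - 1) → ℝ) ℝ)) x :=
    fun k => ((ContinuousLinearMap.proj k).comp
      (ContinuousLinearMap.fst ℝ (Fin (n - 1) → ℝ) ℝ)).hasFDerivAt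
  have h1 : ∀ k : Fin (n - 1), HasFDerivAt (fun x : Pt n => x.1 k * x.1 k)
      (x.1 k • ((ContinuousLinearMap.proj k).comp (ContinuousLinearMap.fst ℝ (Fin (n - 1) → ℝ) ℝ)) +
       x.1 k • ((ContinuousLinearMap.proj k).comp (ContinuousLinearMap.fst ℝ (Fin (n - 1) → ℝ) ℝ))) x :=
    fun k => (hc k).mul (hc k)
  have hs : HasFDerivAt (fun x : Pt n => x.2)
      (ContinuousLinearMap.snd ℝ (Fin (n - 1) → ℝ) ℝ) x :=
    (ContinuousLinearMap.snd ℝ (Fin (n - 1) → ℝ) ℝ).hasFDerivAt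
  have h2 : HasFDerivAt (fun x : Pt n => (x.2 + D) * (x.2 + D))
      ((x.2 + D) • (ContinuousLinearMap.snd ℝ (Fin (n - 1) → ℝ) ℝ) +
       (x.2 + D) • (ContinuousLinearMap.snd ℝ (Fin (n - 1) → ℝ) ℝ)) x :=
    (hs.add_const D).mul (hs.add_const D)
  have h3 := ((HasFDerivAt.fun_sum (fun k (_ : k ∈ Finset.univ) => h1 k)).add h2).sub_const 1
  have : wfun n D = fun x : Pt n => (∑ k, x.1 k * x.1 k) + (x.2 + D) * (x.2 + D) - 1 := by
    funext y; simp [wfun, nsqT, sq]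
  rw [this]
  exact h3

lemma pdT_bubble (n : ℕ) (K D : ℝ) (i : Fin (n - 1)) (x : Pt n) (hx : wfun n D x ≠ 0) :
    pdT i (bubble n K D) x =
      x.1 i * (Cc n K * (pe n * wfun n D x ^ (pe n - 1)) * 2) := by
  have h := ((hasFDerivAt_wfun n D x).rpow_const (p := pe n) (Or.inl hx)).const_mul (Cc n K)
  rw [bubble_eq, pdT, h.fderiv]
  simp only [ContinuousLinearMap.coe_smul', Pi.smul_apply, Lw, ContinuousLinearMap.add_apply,
    ContinuousLinearMap.sum_apply, ContinuousLinearMap.smul_apply,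
    ContinuousLinearMap.coe_comp', Function.comp_apply, ContinuousLinearMap.coe_fst',
    ContinuousLinearMap.proj_apply, ContinuousLinearMap.coe_snd', Pi.single_apply,
    smul_eq_mul, mul_ite, mul_one, mul_zero]
  rw [Finset.sum_add_distrib, Finset.sum_ite_eq' Finset.univ i]
  simp only [Finset.mem_univ, if_true]
  ring

def Phi (n : ℕ) (K D : ℝ) (x : Pt n) : ℝ :=
  x.2 ^ 2 * (Cc n K * (pe n * wfun n D x ^ (pe n - 1)) * 2) ^ 2

lemma sq_pi_norm_le {m : ℕ} (y : Fin m → ℝ) : ‖y‖ ^ 2 ≤ ∑ i, (y i) ^ 2 := by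
  have h0 : (0:ℝ) ≤ ∑ i, (y i) ^ 2 := Finset.sum_nonneg fun _ _ => sq_nonneg _
  have h : ‖y‖ ≤ √(∑ i, (y i) ^ 2) := by
    refine (pi_norm_le_iff_of_nonneg (Real.sqrt_nonneg _)).mpr fun k => ?_
    rw [Real.norm_eq_abs, ← Real.sqrt_sq_eq_abs]
    exact Real.sqrt_le_sqrt (Finset.single_le_sum (f := fun k => (y k)^2)
      (fun _ _ => sq_nonneg _) (Finset.mem_univ k))
  calc ‖y‖ ^ 2 ≤ (√(∑ i, (y i) ^ 2)) ^ 2 := by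
        exact pow_le_pow_left₀ (norm_nonneg _) h 2
    _ = ∑ i, (y i) ^ 2 := Real.sq_sqrt h0

lemma sq_norm_le_pt {n : ℕ} (x : Pt n) : ‖x‖ ^ 2 ≤ nsqT x.1 + x.2 ^ 2 := by
  have h1 : ‖x.1‖ ^ 2 ≤ nsqT x.1 := sq_pi_norm_le x.1
  have h0 : (0:ℝ) ≤ nsqT x.1 := Finset.sum_nonneg fun _ _ => sq_nonneg _
  have hx : ‖x‖ = max ‖x.1‖ ‖x.2‖ := rfl
  rcases max_cases ‖x.1‖ ‖x.2‖ with ⟨h, _⟩ | ⟨h, _⟩ <;> rw [hx, h]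
  · nlinarith [sq_nonneg x.2]
  · rw [Real.norm_eq_abs, sq_abs]; nlinarith

lemma wfun_lb {n : ℕ} {D : ℝ} (hD : 1 < D) {x : Pt n} (hx : 0 < x.2) :
    (D ^ 2 - 1) + ‖x‖ ^ 2 ≤ wfun n D x := by
  have h1 := sq_norm_le_pt x
  have h2 : 0 < x.2 * D := mul_pos hx (lt_trans one_pos hD)
  unfold wfun
  nlinarith

lemma measurable_Phi (n : ℕ) (K D : ℝ) : Measurable (Phi n K D) := by
  have hw : Continuous (wfun n D) := by
    unfold wfun nsqT
    fun_prop
  unfold Phi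
  fun_prop

lemma pe_neg (n : ℕ) (hn : 5 ≤ n) : pe n < 0 := by
  have : (5:ℝ) ≤ (n:ℝ) := by exact_mod_cast hn
  unfold pe; linarith

lemma integrable_term (n : ℕ) (hn : 5 ≤ n) (K D : ℝ) (hD : 1 < D) (i j : Fin (n-1)) :
    IntegrableOn (fun x : Pt n => x.1 i * x.1 j * Phi n K D x) {x : Pt n | 0 < x.2} := by
  haveI : (volume : Measure (Pt n)).IsAddHaarMeasure := by
    have h : (volume : Measure (Pt n)) = (volume : Measure (Fin (n-1) → ℝ)).prod volume := rfl
    rw [h]; infer_instance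
  have hS : MeasurableSet {x : Pt n | 0 < x.2} :=
    measurableSet_lt measurable_const measurable_snd
  set ε : ℝ := D ^ 2 - 1 with hεdef
  have hε : 0 < ε := by nlinarith
  set δ : ℝ := min ε 1 with hδdef
  have hδ : 0 < δ := lt_min hε one_pos
  set c₁ : ℝ := (Cc n K * pe n * 2) ^ 2 with hc₁
  have hc₁0 : 0 ≤ c₁ := sq_nonneg _
  have hpe2 : 2 * pe n ≤ 0 := by nlinarith [pe_neg n hn]
  have hgint : Integrable (fun x : Pt n => c₁ * δ ^ (2 * pe n) * (1 + ‖x‖ ^ 2) ^ (2 * pe n)) := by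
    have hfr : (Module.finrank ℝ (Pt n) : ℝ) < 2 * (n:ℝ) - 4 := by
      have h1 : Module.finrank ℝ (Pt n) = n := by
        simp only [Module.finrank_prod, Module.finrank_pi, Module.finrank_self,
          Fintype.card_fin]
        omega
      rw [h1]
      have h5 : (5:ℝ) ≤ (n:ℝ) := by exact_mod_cast hn
      linarith
    have h := (integrable_rpow_neg_one_add_norm_sq (E := Pt n) (μ := volume) hfr).const_mul
      (c₁ * δ ^ (2 * pe n))
    have heq : (fun x : Pt n => c₁ * δ ^ (2 * pe n) * ((1 + ‖x‖ ^ 2) ^ (-(2 * (n:ℝ) - 4) / 2)))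
        = fun x : Pt n => c₁ * δ ^ (2 * pe n) * (1 + ‖x‖ ^ 2) ^ (2 * pe n) := by
      funext x
      congr 2
      unfold pe; ring
    rwa [heq] at h
  refine Integrable.mono' hgint.integrableOn ?_ ?_
  · exact ((((measurable_pi_apply i).comp measurable_fst).mul
      ((measurable_pi_apply j).comp measurable_fst)).mul (measurable_Phi n K D)).aestronglyMeasurable
  · rw [ae_restrict_iff' hS]
    refine Filter.Eventually.of_forall fun x hx => ?_
    have hx2 : 0 < x.2 := hx
    have hw := wfun_lb hD hx2
    have hεx : 0 < ε + ‖x‖ ^ 2 := by positivity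
    have hwpos : 0 < wfun n D x := lt_of_lt_of_le hεx hw
    set E : ℝ := ε + ‖x‖ ^ 2 with hEdef
    set W : ℝ := wfun n D x ^ (pe n - 1) with hWdef
    have hW0 : 0 ≤ W := Real.rpow_nonneg hwpos.le _
    have hWle : W ≤ E ^ (pe n - 1) :=
      Real.rpow_le_rpow_of_nonpos hεx hw (by nlinarith [pe_neg n hn])
    have h1 : |x.1 i| ≤ ‖x‖ := le_trans (norm_le_pi_norm x.1 i) (norm_fst_le x)
    have h2 : |x.1 j| ≤ ‖x‖ := le_trans (norm_le_pi_norm x.1 j) (norm_fst_le x)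
    have h3 : x.2 ^ 2 ≤ ‖x‖ ^ 2 := by
      have h := norm_snd_le x
      rw [Real.norm_eq_abs] at h
      calc x.2 ^ 2 = |x.2| ^ 2 := (sq_abs _).symm
        _ ≤ ‖x‖ ^ 2 := pow_le_pow_left₀ (abs_nonneg _) h 2
    have hPhi : Phi n K D x = x.2 ^ 2 * (c₁ * W ^ 2) := by
      unfold Phi; rw [hc₁, hWdef]; ring
    have hEpow : E * E ^ (pe n - 1) = E ^ pe n := by
      conv_rhs => rw [show pe n = 1 + (pe n - 1) by ring, Real.rpow_add hεx, Real.rpow_one]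
    have hE2 : (E ^ pe n) ^ 2 = E ^ (2 * pe n) := by
      rw [← Real.rpow_natCast (E ^ pe n) 2, ← Real.rpow_mul hεx.le]
      norm_num [mul_comm]
    calc ‖x.1 i * x.1 j * Phi n K D x‖
        = |x.1 i| * |x.1 j| * (x.2 ^ 2 * (c₁ * W ^ 2)) := by
          rw [Real.norm_eq_abs, abs_mul, abs_mul, hPhi,
            abs_of_nonneg (show (0:ℝ) ≤ x.2 ^ 2 * (c₁ * W ^ 2) by positivity)]
      _ ≤ ‖x‖ * ‖x‖ * (‖x‖ ^ 2 * (c₁ * W ^ 2)) := by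
          refine mul_le_mul (mul_le_mul h1 h2 (abs_nonneg _) (norm_nonneg _))
            (mul_le_mul_of_nonneg_right h3 (by positivity)) (by positivity) (by positivity)
      _ = c₁ * ((‖x‖ ^ 2) ^ 2 * W ^ 2) := by ring
      _ ≤ c₁ * (E ^ 2 * (E ^ (pe n - 1)) ^ 2) := by
          have hx2E : ‖x‖ ^ 2 ≤ E := by rw [hEdef]; nlinarith
          have hgc1 : (‖x‖ ^ 2) ^ 2 ≤ E ^ 2 := pow_le_pow_left₀ (sq_nonneg _) hx2E 2
          have hgc2 : W ^ 2 ≤ (E ^ (pe n - 1)) ^ 2 := pow_le_pow_left₀ hW0 hWle 2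
          exact mul_le_mul_of_nonneg_left
            (mul_le_mul hgc1 hgc2 (sq_nonneg W) (sq_nonneg E)) hc₁0
      _ = c₁ * (E * E ^ (pe n - 1)) ^ 2 := by ring
      _ = c₁ * E ^ (2 * pe n) := by rw [hEpow, hE2]
      _ ≤ c₁ * (δ * (1 + ‖x‖ ^ 2)) ^ (2 * pe n) := by
          have hle : δ * (1 + ‖x‖ ^ 2) ≤ E := by
            have hδε : δ ≤ ε := min_le_left _ _
            have hδ1 : δ ≤ 1 := min_le_right _ _
            rw [hEdef]; nlinarith [sq_nonneg ‖x‖]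
          have hpos : 0 < δ * (1 + ‖x‖ ^ 2) := by positivity
          exact mul_le_mul_of_nonneg_left
            (Real.rpow_le_rpow_of_nonpos hpos hle hpe2) hc₁0
      _ = c₁ * δ ^ (2 * pe n) * (1 + ‖x‖ ^ 2) ^ (2 * pe n) := by
          rw [Real.mul_rpow hδ.le (by positivity)]; ring

lemma setIntegral_comp_mp {α : Type*} [MeasurableSpace α] {μ : Measure α} {φ : α → α}
    (hφ : MeasurePreserving φ μ μ) {S : Set α} (hS : MeasurableSet S) (hpre : φ ⁻¹' S = S)
    (f : α → ℝ) (hf : AEStronglyMeasurable f (μ.restrict S)) :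
    ∫ x in S, f x ∂μ = ∫ x in S, f (φ x) ∂μ := by
  have hres : MeasurePreserving φ (μ.restrict S) (μ.restrict S) := by
    have := hφ.restrict_preimage hS; rwa [hpre] at this
  calc ∫ x in S, f x ∂μ = ∫ y, f y ∂(Measure.map φ (μ.restrict S)) := by rw [hres.map_eq]
    _ = ∫ x, f (φ x) ∂(μ.restrict S) := integral_map hres.aemeasurable (by rwa [hres.map_eq])

-- negation of one coordinate in a pi type
lemma mp_negcoord {m : ℕ} (i : Fin m) :
    MeasurePreserving (fun y : Fin m → ℝ => fun k => if k = i then -(y k) else y k)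
      volume volume := by
  have h : ∀ k : Fin m, MeasurePreserving (fun t : ℝ => if k = i then -t else t)
      volume volume := by
    intro k
    by_cases hk : k = i
    · simpa [hk] using Measure.measurePreserving_neg (volume : Measure ℝ)
    · simp only [hk, if_false]; exact MeasurePreserving.id _
  exact volume_preserving_pi h

-- permutation of coordinates
lemma mp_perm_s19 {m : ℕ} (σ : Equiv.Perm (Fin m)) :
    MeasurePreserving (fun y : Fin m → ℝ => fun k => y (σ k)) volume volume := by
  have h := volume_preserving_arrowCongr' (β₁ := ℝ) (β₂ := ℝ) σ.symm (MeasurableEquiv.refl ℝ)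
    (MeasurePreserving.id _)
  have he : ⇑(MeasurableEquiv.arrowCongr' (α₁ := Fin m) (α₂ := Fin m) σ.symm
      (MeasurableEquiv.refl ℝ)) = fun y (k : Fin m) => y (σ k) := by
    funext y k
    simp [MeasurableEquiv.arrowCongr', Equiv.arrowCongr', Equiv.arrowCongr]
  rwa [he] at h

-- product with identity on ℝ
lemma mp_prod_left {m : ℕ} {g : (Fin m → ℝ) → (Fin m → ℝ)}
    (hg : MeasurePreserving g volume volume) :
    MeasurePreserving (fun x : (Fin m → ℝ) × ℝ => (g x.1, x.2)) volume volume :=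
  hg.prod (MeasurePreserving.id (volume : Measure ℝ))

lemma key_antisym {m : ℕ} (g : Fin m → Fin m → ℝ) (hg : ∀ i k, g i k = -g k i) :
    ∑ i, ∑ k, g i k = 0 := by
  have h1 : (∑ i, ∑ k, g i k) + (∑ i, ∑ k, g i k) = 0 := by
    nth_rewrite 1 [Finset.sum_comm (f := g)]
    rw [← Finset.sum_add_distrib]
    refine Finset.sum_eq_zero fun a _ => ?_
    rw [← Finset.sum_add_distrib]
    refine Finset.sum_eq_zero fun b _ => ?_
    rw [hg b a]; ring
  linarith

lemma alg_split {m : ℕ} (A : Fin m → Fin m → Fin m → Fin m → ℝ)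
    (hA1 : ∀ i k j l, A i k j l = -A k i j l)
    (B : Fin m → Fin m → ℝ) (y : Fin m → ℝ) (t g : ℝ) :
    ∑ i, ∑ j, ((1 / 3) * (∑ k, ∑ l, A i k j l * y k * y l) + B i j * t) * (y i * g) * (y j * g)
      = ∑ i, ∑ j, B i j * (y i * y j * (t * g ^ 2)) := by
  have hT : ∑ i, ∑ k, (∑ j, ∑ l, A i k j l * y k * y l * (y i * y j)) = 0 := by
    refine key_antisym _ fun i k => ?_
    rw [← Finset.sum_neg_distrib]
    refine Finset.sum_congr rfl fun j _ => ?_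
    rw [← Finset.sum_neg_distrib]
    refine Finset.sum_congr rfl fun l _ => ?_
    rw [hA1 i k j l]; ring
  have expand : ∀ i j : Fin m,
      ((1 / 3) * (∑ k, ∑ l, A i k j l * y k * y l) + B i j * t) * (y i * g) * (y j * g)
      = (1/3) * g^2 * (∑ k, ∑ l, A i k j l * y k * y l * (y i * y j))
        + B i j * (y i * y j * (t * g ^ 2)) := by
    intro i j
    have hs : (∑ k, ∑ l, A i k j l * y k * y l) * (y i * y j)
        = ∑ k, ∑ l, A i k j l * y k * y l * (y i * y j) := by
      rw [Finset.sum_mul]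
      exact Finset.sum_congr rfl fun k _ => Finset.sum_mul ..
    rw [← hs]; ring
  calc ∑ i, ∑ j, ((1 / 3) * (∑ k, ∑ l, A i k j l * y k * y l) + B i j * t) * (y i * g) * (y j * g)
      = ∑ i, ∑ j, ((1/3) * g^2 * (∑ k, ∑ l, A i k j l * y k * y l * (y i * y j))
        + B i j * (y i * y j * (t * g ^ 2))) := by
        exact Finset.sum_congr rfl fun i _ => Finset.sum_congr rfl fun j _ => expand i j
    _ = (1/3) * g^2 * (∑ i, ∑ k, (∑ j, ∑ l, A i k j l * y k * y l * (y i * y j)))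
        + ∑ i, ∑ j, B i j * (y i * y j * (t * g ^ 2)) := by
        simp_rw [Finset.sum_add_distrib, Finset.mul_sum]
        congr 1
        refine Finset.sum_congr rfl fun i _ => ?_
        rw [Finset.sum_comm]
    _ = ∑ i, ∑ j, B i j * (y i * y j * (t * g ^ 2)) := by rw [hT]; ring

-- norm lemmas


/-- under the curvature symmetry hypotheses on `A` and `B`, the
second-order term in the expansion of the gradient energy of the bubble
vanishes:
`∫_{ℝⁿ₊} Σᵢⱼ [ (1/3) Σₖₗ Aᵢₖⱼₗ xₖ xₗ + Bᵢⱼ xₙ² ] ∂ᵢU ∂ⱼU dx = 0`,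
the integrand being absolutely integrable. -/
theorem stmt_19 (n : ℕ) (hn : 5 ≤ n) (K D : ℝ) (hK : K < 0) (hD : 1 < D)
    (A : Fin (n - 1) → Fin (n - 1) → Fin (n - 1) → Fin (n - 1) → ℝ)
    (B : Fin (n - 1) → Fin (n - 1) → ℝ)
    (hA1 : ∀ i k j l, A i k j l = -A k i j l)
    (hA2 : ∀ i k j l, A i k j l = -A i k l j)
    (hA3 : ∀ i k j l, A i k j l = A j l i k)
    (hA4 : ∀ k l, ∑ i, A i k i l = 0)
    (hB1 : ∀ i j, B i j = B j i)
    (hB2 : ∑ i, B i i = 0)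
    (U : Pt n → ℝ) (hU : U = bubble n K D)
    (F : Pt n → ℝ)
    (hF : F = fun x : Pt n =>
      ∑ i, ∑ j,
        ((1 / 3) * (∑ k, ∑ l, A i k j l * x.1 k * x.1 l) + B i j * x.2 ^ 2) *
          pdT i U x * pdT j U x) :
    IntegrableOn F {x : Pt n | 0 < x.2} ∧
    ∫ x in {x : Pt n | 0 < x.2}, F x = 0 := by
  set S : Set (Pt n) := {x : Pt n | 0 < x.2} with hSdef
  have hS : MeasurableSet S := measurableSet_lt measurable_const measurable_snd
  have hε : (0:ℝ) < D ^ 2 - 1 := by nlinarith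
  have hwpos : ∀ x ∈ S, 0 < wfun n D x := by
    intro x hx
    have := wfun_lb hD (show 0 < x.2 from hx)
    nlinarith [sq_nonneg ‖x‖]
  -- pointwise formula on S
  have hFS : ∀ x ∈ S, F x = ∑ i, ∑ j, B i j * (x.1 i * x.1 j * Phi n K D x) := by
    intro x hx
    have hwne : wfun n D x ≠ 0 := ne_of_gt (hwpos x hx)
    have hp : ∀ i : Fin (n - 1),
        pdT i U x = x.1 i * (Cc n K * (pe n * wfun n D x ^ (pe n - 1)) * 2) := by
      intro i; rw [hU]; exact pdT_bubble n K D i x hwne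
    rw [hF]
    beta_reduce
    have h1 : (∑ i, ∑ j,
        ((1 / 3) * (∑ k, ∑ l, A i k j l * x.1 k * x.1 l) + B i j * x.2 ^ 2) *
          pdT i U x * pdT j U x)
        = ∑ i, ∑ j,
        ((1 / 3) * (∑ k, ∑ l, A i k j l * x.1 k * x.1 l) + B i j * x.2 ^ 2) *
          (x.1 i * (Cc n K * (pe n * wfun n D x ^ (pe n - 1)) * 2)) *
          (x.1 j * (Cc n K * (pe n * wfun n D x ^ (pe n - 1)) * 2)) := by
      refine Finset.sum_congr rfl fun i _ => Finset.sum_congr rfl fun j _ => ?_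
      rw [hp i, hp j]
    rw [h1, alg_split A hA1 B x.1 (x.2 ^ 2) (Cc n K * (pe n * wfun n D x ^ (pe n - 1)) * 2)]
    rfl
  -- integrability of the nice version
  have hterm : ∀ i j : Fin (n - 1),
      IntegrableOn (fun x : Pt n => B i j * (x.1 i * x.1 j * Phi n K D x)) S := by
    intro i j
    exact (integrable_term n hn K D hD i j).const_mul (B i j)
  have hnice : IntegrableOn
      (fun x : Pt n => ∑ i, ∑ j, B i j * (x.1 i * x.1 j * Phi n K D x)) S := by
    apply integrable_finset_sum
    intro i _
    apply integrable_finset_sum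
    intro j _
    exact hterm i j
  have hae : (fun x : Pt n => ∑ i, ∑ j, B i j * (x.1 i * x.1 j * Phi n K D x))
      =ᵐ[volume.restrict S] F := by
    rw [Filter.EventuallyEq, ae_restrict_iff' hS]
    exact Filter.Eventually.of_forall fun x hx => (hFS x hx).symm
  constructor
  · exact hnice.congr hae
  -- now the integral
  have hint_eq : ∫ x in S, F x
      = ∑ i, ∑ j, B i j * ∫ x in S, x.1 i * x.1 j * Phi n K D x := by
    rw [← integral_congr_ae hae]
    rw [integral_finset_sum Finset.univ (fun i _ => integrable_finset_sum _ (fun j _ => hterm i j))]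
    refine Finset.sum_congr rfl fun i _ => ?_
    rw [integral_finset_sum Finset.univ (fun j _ => hterm i j)]
    refine Finset.sum_congr rfl fun j _ => ?_
    exact integral_const_mul _ _
  -- change of variables helpers
  have hPhi_inv : ∀ (g : (Fin (n-1) → ℝ) → (Fin (n-1) → ℝ)),
      (∀ y, nsqT (g y) = nsqT y) →
      ∀ x : Pt n, Phi n K D (g x.1, x.2) = Phi n K D x := by
    intro g hg x
    unfold Phi wfun
    rw [hg]
  -- off-diagonal terms vanish
  have hoff : ∀ i j : Fin (n - 1), i ≠ j →
      (∫ x in S, x.1 i * x.1 j * Phi n K D x) = 0 := by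
    intro i j hij
    set g : (Fin (n-1) → ℝ) → (Fin (n-1) → ℝ) :=
      fun y k => if k = i then -(y k) else y k with hgdef
    have hgns : ∀ y, nsqT (g y) = nsqT y := by
      intro y
      unfold nsqT
      refine Finset.sum_congr rfl fun k _ => ?_
      by_cases hk : k = i <;> simp [hgdef, hk]
    have hφ : MeasurePreserving (fun x : Pt n => (g x.1, x.2)) volume volume :=
      mp_prod_left (mp_negcoord i)
    have hpre : (fun x : Pt n => (g x.1, x.2)) ⁻¹' S = S := by
      ext x; simp [hSdef]
    have hmeas : AEStronglyMeasurable (fun x : Pt n => x.1 i * x.1 j * Phi n K D x)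
        (volume.restrict S) :=
      ((((measurable_pi_apply i).comp measurable_fst).mul
        ((measurable_pi_apply j).comp measurable_fst)).mul
          (measurable_Phi n K D)).aestronglyMeasurable
    have hchg := setIntegral_comp_mp hφ hS hpre
      (fun x : Pt n => x.1 i * x.1 j * Phi n K D x) hmeas
    have hcomp : ∀ x : Pt n,
        ((g x.1, x.2) : Pt n).1 i * ((g x.1, x.2) : Pt n).1 j * Phi n K D (g x.1, x.2)
          = -(x.1 i * x.1 j * Phi n K D x) := by
      intro x
      rw [hPhi_inv g hgns x]
      have h1 : g x.1 i = -(x.1 i) := by simp [hgdef]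
      have h2 : g x.1 j = x.1 j := by simp [hgdef, hij.symm]
      show g x.1 i * g x.1 j * Phi n K D x = _
      rw [h1, h2]; ring
    rw [show (fun x : Pt n => ((g x.1, x.2) : Pt n).1 i * ((g x.1, x.2) : Pt n).1 j
        * Phi n K D (g x.1, x.2)) = fun x : Pt n => -(x.1 i * x.1 j * Phi n K D x) from
      funext hcomp] at hchg
    rw [integral_neg] at hchg
    linarith
  -- diagonal terms are all equal
  have hdiag : ∀ i i' : Fin (n - 1),
      (∫ x in S, x.1 i * x.1 i * Phi n K D x)
        = ∫ x in S, x.1 i' * x.1 i' * Phi n K D x := by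
    intro i i'
    set σ : Equiv.Perm (Fin (n-1)) := Equiv.swap i i' with hσdef
    set g : (Fin (n-1) → ℝ) → (Fin (n-1) → ℝ) := fun y k => y (σ k) with hgdef
    have hgns : ∀ y, nsqT (g y) = nsqT y := by
      intro y
      unfold nsqT
      exact Equiv.sum_comp σ (fun k => (y k) ^ 2)
    have hφ : MeasurePreserving (fun x : Pt n => (g x.1, x.2)) volume volume :=
      mp_prod_left (mp_perm_s19 σ)
    have hpre : (fun x : Pt n => (g x.1, x.2)) ⁻¹' S = S := by
      ext x; simp [hSdef]
    have hmeas : AEStronglyMeasurable (fun x : Pt n => x.1 i * x.1 i * Phi n K D x)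
        (volume.restrict S) :=
      ((((measurable_pi_apply i).comp measurable_fst).mul
        ((measurable_pi_apply i).comp measurable_fst)).mul
          (measurable_Phi n K D)).aestronglyMeasurable
    have hchg := setIntegral_comp_mp hφ hS hpre
      (fun x : Pt n => x.1 i * x.1 i * Phi n K D x) hmeas
    have hcomp : ∀ x : Pt n,
        ((g x.1, x.2) : Pt n).1 i * ((g x.1, x.2) : Pt n).1 i * Phi n K D (g x.1, x.2)
          = x.1 i' * x.1 i' * Phi n K D x := by
      intro x
      rw [hPhi_inv g hgns x]
      have h1 : g x.1 i = x.1 i' := by simp [hgdef, hσdef, Equiv.swap_apply_left]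
      show g x.1 i * g x.1 i * Phi n K D x = _
      rw [h1]
    rw [show (fun x : Pt n => ((g x.1, x.2) : Pt n).1 i * ((g x.1, x.2) : Pt n).1 i
        * Phi n K D (g x.1, x.2)) = fun x : Pt n => x.1 i' * x.1 i' * Phi n K D x from
      funext hcomp] at hchg
    exact hchg
  -- conclude
  have i₀ : Fin (n - 1) := ⟨0, by omega⟩
  rw [hint_eq]
  have hsum : ∀ i : Fin (n - 1),
      (∑ j, B i j * ∫ x in S, x.1 i * x.1 j * Phi n K D x)
        = B i i * ∫ x in S, x.1 i₀ * x.1 i₀ * Phi n K D x := by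
    intro i
    rw [Finset.sum_eq_single i]
    · rw [hdiag i i₀]
    · intro j _ hji
      rw [hoff i j (Ne.symm hji), mul_zero]
    · intro h; exact absurd (Finset.mem_univ i) h
  rw [Finset.sum_congr rfl fun i _ => hsum i, ← Finset.sum_mul, hB2, zero_mul]
end
end
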